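/- Let S be a finite set, B ⊆ S with B ≠ S, and let p̄ : S → [0,1] be a probability vector on S (nonnegative entries summing to 1). Set c = Σ_{b∈B} p̄(b) and m = |S∖B|. Then the minimum of max_{t∈S} |q(t) − p̄(t)| over all probability vectors q on S with q(b) = 0 for all b ∈ B equals max( max_{b∈B} p̄(b), c/m ) (where the maximum over an empty B is taken to be 0), and it is attained by the vector q with q(b) = 0 for b ∈ B and q(t) = p̄(t) + c/m for t ∈ S∖B. -/

import Mathlib

open scoped BigOperators Classical

/-- Correctness of the oracle `force_A` for `L_∞`-ball uncertainty sets: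
given a probability vector `p̄` on a finite set `S` and `B ⊆ S` with `B ≠ S`,
the minimum of `max_{t∈S} |q(t) − p̄(t)|` over all probability vectors `q`
vanishing on `B` equals `max(max_{b∈B} p̄(b), c/m)` (the maximum over an empty
`B` being `0`), where `c = Σ_{b∈B} p̄(b)` and `m = |S∖B|`, and it is attained
by zeroing `p̄` on `B` and distributing the mass `c` equally over `S ∖ B`. -/
theorem stmt15 {S : Type} [Fintype S] (B : Finset S) (hB : B ≠ Finset.univ)
    (pbar : S → ℝ) (hpos : ∀ t, 0 ≤ pbar t) (hsum : ∑ t, pbar t = 1) :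
    letI c : ℝ := ∑ b ∈ B, pbar b
    letI m : ℕ := (Finset.univ \ B).card
    letI q : S → ℝ := fun t => if t ∈ B then 0 else pbar t + c / m
    (∀ t, 0 ≤ q t) ∧ (∑ t, q t = 1) ∧ (∀ b ∈ B, q b = 0) ∧
      ((⨆ t, |q t - pbar t|) = max (⨆ b ∈ B, pbar b) (c / m)) ∧
      IsLeast
        {x : ℝ | ∃ r : S → ℝ, (∀ t, 0 ≤ r t) ∧ (∑ t, r t = 1) ∧
          (∀ b ∈ B, r b = 0) ∧ x = ⨆ t, |r t - pbar t|}
        (max (⨆ b ∈ B, pbar b) (c / m)) := by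
  set c : ℝ := ∑ b ∈ B, pbar b with hcdef
  set q : S → ℝ := fun t => if t ∈ B then 0 else pbar t + c / ↑(Finset.univ \ B).card with hqdef
  set m : ℕ := (Finset.univ \ B).card with hmdef
  set A : Finset S := Finset.univ \ B with hA
  have hAne : A.Nonempty := by
    rw [hA, Finset.sdiff_nonempty]
    intro h
    exact hB (le_antisymm (Finset.subset_univ B) h)
  haveI : Nonempty S := ⟨hAne.choose⟩
  have hmpos : 0 < (m : ℝ) := by
    exact_mod_cast Finset.card_pos.mpr hAne
  have hc : 0 ≤ c := Finset.sum_nonneg fun b _ => hpos b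
  have hcm : 0 ≤ c / m := div_nonneg hc hmpos.le
  have hsdiff : ∑ t ∈ A, pbar t + ∑ t ∈ B, pbar t = ∑ t, pbar t :=
    Finset.sum_sdiff (Finset.subset_univ B)
  have hApbar : ∑ t ∈ A, pbar t = 1 - c := by
    rw [hsum] at hsdiff; linarith [hsdiff]
  -- nonnegativity of q
  have h1 : ∀ t, 0 ≤ q t := by
    intro t
    by_cases h : t ∈ B
    · simp [q, h]
    · simp only [q, if_neg h]
      exact add_nonneg (hpos t) hcm
  -- q vanishes on B
  have h3 : ∀ b ∈ B, q b = 0 := fun b hb => if_pos hb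
  -- sum of q is 1
  have h2 : ∑ t, q t = 1 := by
    have hBsum : ∑ t ∈ B, q t = 0 := Finset.sum_eq_zero fun t ht => h3 t ht
    have hAq : ∑ t ∈ A, q t = ∑ t ∈ A, (pbar t + c / (m : ℝ)) :=
      Finset.sum_congr rfl fun t ht => by
        simp [q, (Finset.mem_sdiff.mp ht).2]; rfl
    have hms : (m : ℝ) * (c / m) = c := by field_simp
    calc ∑ t, q t = ∑ t ∈ A, q t + ∑ t ∈ B, q t :=
            (Finset.sum_sdiff (Finset.subset_univ B)).symm
      _ = (∑ t ∈ A, pbar t) + (m : ℝ) * (c / m) + 0 := by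
            rw [hAq, hBsum, Finset.sum_add_distrib, Finset.sum_const,
              nsmul_eq_mul]
      _ = 1 := by rw [hApbar, hms]; ring
  -- explicit formula for the deviation
  have hf : ∀ t, |q t - pbar t| = if t ∈ B then pbar t else c / m := by
    intro t
    by_cases h : t ∈ B
    · simp [q, h, abs_of_nonneg (hpos t)]
    · simp [q, h, abs_of_nonneg hcm]; exact abs_of_nonneg hcm
  set M : ℝ := ⨆ b ∈ B, pbar b with hMdef
  have hMub : ∀ b ∈ B, pbar b ≤ M := by
    intro b hb
    have h1 : pbar b ≤ ⨆ _ : b ∈ B, pbar b := by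
      rw [ciSup_pos (p := b ∈ B) (f := fun _ => pbar b) hb]
    have h2 : (⨆ _ : b ∈ B, pbar b) ≤ M :=
      le_ciSup (f := fun b => ⨆ _ : b ∈ B, pbar b)
        (Set.Finite.bddAbove (Set.finite_range _)) b
    exact le_trans h1 h2
  have hMle : ∀ x : ℝ, 0 ≤ x → (∀ b ∈ B, pbar b ≤ x) → M ≤ x := by
    intro x hx h
    exact Real.iSup_le (fun b => Real.iSup_le (fun hb => h b hb) hx) hx
  -- generic lower bound for any feasible r
  have hlow : ∀ r : S → ℝ, (∀ t, 0 ≤ r t) → (∑ t, r t = 1) →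
      (∀ b ∈ B, r b = 0) → max M (c / m) ≤ ⨆ t, |r t - pbar t| := by
    intro r hr0 hr1 hrB
    set Vr : ℝ := ⨆ t, |r t - pbar t| with hVr
    have hbdd : BddAbove (Set.range fun t => |r t - pbar t|) :=
      Set.Finite.bddAbove (Set.finite_range _)
    have hub : ∀ t, |r t - pbar t| ≤ Vr := fun t => le_ciSup hbdd t
    have hVr0 : 0 ≤ Vr := le_trans (abs_nonneg _) (hub Classical.ofNonempty)
    have hMVr : M ≤ Vr := by
      refine hMle Vr hVr0 fun b hb => ?_
      have : |r b - pbar b| = pbar b := by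
        rw [hrB b hb, zero_sub, abs_neg, abs_of_nonneg (hpos b)]
      rw [← this]; exact hub b
    have hBr : ∑ t ∈ B, r t = 0 := Finset.sum_eq_zero hrB
    have hAr : ∑ t ∈ A, r t = 1 := by
      have := Finset.sum_sdiff (Finset.subset_univ B) (f := r)
      rw [hr1, hBr] at this; linarith [this]
    have hsumA : ∑ t ∈ A, (r t - pbar t) = c := by
      rw [Finset.sum_sub_distrib, hAr, hApbar]; ring
    have hex : ∃ t ∈ A, c / m ≤ r t - pbar t := by
      apply Finset.exists_le_of_sum_le hAne
      rw [Finset.sum_const, nsmul_eq_mul, hsumA]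
      rw [mul_div_cancel₀ c (ne_of_gt hmpos)]
    obtain ⟨t₀, _, ht₀⟩ := hex
    have hcmVr : c / m ≤ Vr :=
      le_trans ht₀ (le_trans (le_abs_self _) (hub t₀))
    exact max_le hMVr hcmVr
  -- value of the sup for q
  have h4 : (⨆ t, |q t - pbar t|) = max M (c / m) := by
    refine le_antisymm ?_ (hlow q h1 h2 h3)
    refine Real.iSup_le (fun t => ?_) (le_trans hcm (le_max_right _ _))
    rw [hf t]
    by_cases h : t ∈ B
    · rw [if_pos h]; exact le_trans (hMub t h) (le_max_left _ _)
    · rw [if_neg h]; exact le_max_right _ _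
  refine ⟨h1, h2, h3, h4, ⟨q, h1, h2, h3, h4.symm⟩, ?_⟩
  rintro x ⟨r, hr0, hr1, hrB, rfl⟩
  exact hlow r hr0 hr1 hrB
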